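/- Let M be a matroid on a finite ground set E with rank function rk, and let I be a modular ideal of M. Then there exists a matroid N on the same ground set E whose rank function rk_I satisfies, for all S ⊆ E: rk_I(S) = rk(S) if S ∈ I, and rk_I(S) = rk(S) + 1 otherwise. (The function rk_I is the rank function of a matroid, the elementary I-lift of M.) -/

import Mathlib

open Set

/-- The rank of a set `S` in a matroid `M`: the largest cardinality of an independent
subset of `S`. -/
noncomputable def Matroid.rk' {α : Type*} (M : Matroid α) (S : Set α) : ℕ :=
  sSup (Set.ncard '' {I : Set α | M.Indep I ∧ I ⊆ S})

/-- A circuit of `M`: a minimal dependent set, i.e. a dependent set all of whose proper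
subsets are independent. -/
def Matroid.IsCircuit' {α : Type*} (M : Matroid α) (C : Set α) : Prop :=
  M.Dep C ∧ ∀ D : Set α, D ⊂ C → M.Indep D

/-- `S` and `T` form a modular pair in `M`: `rk(S ∩ T) + rk(S ∪ T) = rk S + rk T`. -/
def Matroid.ModularPairSets {α : Type*} (M : Matroid α) (S T : Set α) : Prop :=
  M.rk' (S ∩ T) + M.rk' (S ∪ T) = M.rk' S + M.rk' T

/-- A modular ideal of `M`: a nonempty downward-closed family of subsets containing `{e}`
for every non-loop `e` and closed under unions of modular pairs. -/
def Matroid.ModularIdeal {α : Type*} (M : Matroid α) (I : Set (Set α)) : Prop :=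
  I.Nonempty ∧ (∀ A B : Set α, A ⊆ B → B ∈ I → A ∈ I) ∧
    (∀ e : α, M.Indep {e} → {e} ∈ I) ∧
    (∀ A B : Set α, A ∈ I → B ∈ I → M.ModularPairSets A B → A ∪ B ∈ I)

/-- A linear class of circuits of `M`: a set `L` of circuits such that whenever
`X, Y ∈ L` form a modular pair, every circuit `Z ⊆ X ∪ Y` belongs to `L`. -/
def Matroid.LinearClass {α : Type*} (M : Matroid α) (L : Set (Set α)) : Prop :=
  (∀ C ∈ L, M.IsCircuit' C) ∧
    ∀ X ∈ L, ∀ Y ∈ L, M.ModularPairSets X Y →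
      ∀ Z : Set α, M.IsCircuit' Z → Z ⊆ X ∪ Y → Z ∈ L

namespace ElemLift

open Matroid

variable {α : Type*} [Fintype α]

lemma bddAbove_ncards (M : Matroid α) (S : Set α) :
    BddAbove (Set.ncard '' {I : Set α | M.Indep I ∧ I ⊆ S}) := by
  refine ⟨(Set.univ : Set α).ncard, ?_⟩
  rintro n ⟨J, -, rfl⟩
  exact Set.ncard_le_ncard (Set.subset_univ J) Set.finite_univ

lemma rk'_exists (M : Matroid α) (S : Set α) :
    ∃ B, M.Indep B ∧ B ⊆ S ∧ B.ncard = M.rk' S := by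
  have hne : (Set.ncard '' {I : Set α | M.Indep I ∧ I ⊆ S}).Nonempty :=
    ⟨0, ∅, ⟨M.empty_indep, Set.empty_subset _⟩, by simp⟩
  obtain ⟨B, hB, h⟩ := Nat.sSup_mem hne (bddAbove_ncards M S)
  exact ⟨B, hB.1, hB.2, h⟩

lemma ncard_le_rk' {M : Matroid α} {J S : Set α} (hJ : M.Indep J) (hJS : J ⊆ S) :
    J.ncard ≤ M.rk' S :=
  le_csSup (bddAbove_ncards M S) ⟨J, ⟨hJ, hJS⟩, rfl⟩

lemma rk'_mono (M : Matroid α) {S T : Set α} (h : S ⊆ T) : M.rk' S ≤ M.rk' T := by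
  obtain ⟨B, hB, hBS, hcard⟩ := rk'_exists M S
  rw [← hcard]; exact ncard_le_rk' hB (hBS.trans h)

lemma rk'_le_ncard (M : Matroid α) (S : Set α) : M.rk' S ≤ S.ncard := by
  obtain ⟨B, -, hBS, hcard⟩ := rk'_exists M S
  rw [← hcard]; exact Set.ncard_le_ncard hBS (Set.toFinite S)

lemma rk'_indep {M : Matroid α} {S : Set α} (h : M.Indep S) : M.rk' S = S.ncard :=
  le_antisymm (rk'_le_ncard M S) (ncard_le_rk' h subset_rfl)

lemma rk'_empty (M : Matroid α) : M.rk' ∅ = 0 := by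
  simpa using rk'_le_ncard M ∅

lemma rk'_insert_le (M : Matroid α) (S : Set α) (e : α) :
    M.rk' (insert e S) ≤ M.rk' S + 1 := by
  obtain ⟨B, hB, hBS, hcard⟩ := rk'_exists M (insert e S)
  have h1 : M.Indep (B \ {e}) := hB.subset diff_subset
  have h2 : B \ {e} ⊆ S := by
    rintro x ⟨hxB, hxe⟩
    rcases hBS hxB with h | h
    · exact absurd h hxe
    · exact h
  have h3 := ncard_le_rk' h1 h2
  have h4 : B.ncard ≤ (B \ {e}).ncard + 1 := by
    by_cases he : e ∈ B
    · rw [Set.ncard_diff_singleton_add_one he (Set.toFinite B)]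
    · rw [Set.diff_singleton_eq_self he]; omega
  omega

lemma rk'_insert_of_dep (M : Matroid α) {S : Set α} {e : α} (h : ¬ M.Indep {e}) :
    M.rk' (insert e S) = M.rk' S := by
  refine le_antisymm ?_ (rk'_mono M (subset_insert e S))
  obtain ⟨B, hB, hBS, hcard⟩ := rk'_exists M (insert e S)
  have heB : e ∉ B := fun heB => h (hB.subset (Set.singleton_subset_iff.mpr heB))
  have hBS' : B ⊆ S := fun x hx => by
    rcases hBS hx with h' | h'
    · exact absurd (h' ▸ hx) heB
    · exact h'
  rw [← hcard]; exact ncard_le_rk' hB hBS'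

/-- Extend an independent subset of `S` to one achieving the rank of `S`. -/
lemma exists_achiever_superset (M : Matroid α) {A S : Set α}
    (hA : M.Indep A) (hAS : A ⊆ S) :
    ∃ B, M.Indep B ∧ A ⊆ B ∧ B ⊆ S ∧ B.ncard = M.rk' S := by
  have key : ∀ k : ℕ, ∀ A : Set α, M.Indep A → A ⊆ S → M.rk' S ≤ A.ncard + k →
      ∃ B, M.Indep B ∧ A ⊆ B ∧ B ⊆ S ∧ B.ncard = M.rk' S := by
    intro k
    induction k with
    | zero =>
      intro A hA hAS hle
      exact ⟨A, hA, subset_rfl, hAS, le_antisymm (ncard_le_rk' hA hAS) (by simpa using hle)⟩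
    | succ k ih =>
      intro A hA hAS hle
      by_cases h : M.rk' S ≤ A.ncard + k
      · exact ih A hA hAS h
      · push_neg at h
        obtain ⟨C, hC, hCS, hCcard⟩ := rk'_exists M S
        have hlt : A.encard < C.encard := by
          rw [← (Set.toFinite A).cast_ncard_eq, ← (Set.toFinite C).cast_ncard_eq]
          exact_mod_cast by omega
        obtain ⟨x, hx, hxA⟩ := hA.augment hC hlt
        have hxS : x ∈ S := hCS hx.1
        have hcard : (insert x A).ncard = A.ncard + 1 :=
          Set.ncard_insert_of_notMem hx.2 (Set.toFinite A)
        obtain ⟨B, hB, hAB, hBS, hBcard⟩ :=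
          ih (insert x A) hxA (insert_subset hxS hAS) (by omega)
        exact ⟨B, hB, (subset_insert x A).trans hAB, hBS, hBcard⟩
  exact key (M.rk' S) A hA hAS (by omega)

lemma rk'_submod (M : Matroid α) (S T : Set α) :
    M.rk' (S ∩ T) + M.rk' (S ∪ T) ≤ M.rk' S + M.rk' T := by
  obtain ⟨A, hA, hAST, hAcard⟩ := rk'_exists M (S ∩ T)
  obtain ⟨B, hB, hAB, hBST, hBcard⟩ :=
    exists_achiever_superset M hA (hAST.trans (fun x hx => Or.inl hx.1))
  have h1 : (B ∩ S).ncard ≤ M.rk' S :=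
    ncard_le_rk' (hB.subset inter_subset_left) inter_subset_right
  have h2 : (B ∩ T).ncard ≤ M.rk' T :=
    ncard_le_rk' (hB.subset inter_subset_left) inter_subset_right
  have hU : (B ∩ S) ∪ (B ∩ T) = B := by
    rw [← Set.inter_union_distrib_left]
    exact inter_eq_self_of_subset_left hBST
  have hident := Set.ncard_union_add_ncard_inter (B ∩ S) (B ∩ T) (Set.toFinite _) (Set.toFinite _)
  rw [hU] at hident
  have hIn : A ⊆ (B ∩ S) ∩ (B ∩ T) := fun x hx =>
    ⟨⟨hAB hx, (hAST hx).1⟩, hAB hx, (hAST hx).2⟩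
  have h3 : M.rk' (S ∩ T) ≤ ((B ∩ S) ∩ (B ∩ T)).ncard := by
    rw [← hAcard]; exact Set.ncard_le_ncard hIn (Set.toFinite _)
  have hck : B.ncard = M.rk' (S ∪ T) := hBcard
  have hck2 : B.ncard + ((B ∩ S) ∩ (B ∩ T)).ncard = (B ∩ S).ncard + (B ∩ T).ncard := hident
  omega

section Lift

variable (M : Matroid α) (I : Set (Set α))

open scoped Classical in
/-- The candidate rank function of the lift. -/
noncomputable def lr (S : Set α) : ℕ := M.rk' S + (if S ∈ I then 0 else 1)

variable {M I}

lemma lr_of_mem {S : Set α} (h : S ∈ I) : lr M I S = M.rk' S := by simp [lr, h]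

lemma lr_of_not_mem {S : Set α} (h : S ∉ I) : lr M I S = M.rk' S + 1 := by simp [lr, h]

variable (hI : M.ModularIdeal I)
include hI

lemma empty_mem : ∅ ∈ I := by
  obtain ⟨⟨X, hX⟩, hdown, -, -⟩ := hI
  exact hdown ∅ X (empty_subset X) hX

lemma lr_empty : lr M I ∅ = 0 := by
  rw [lr_of_mem (empty_mem hI), rk'_empty]

lemma lr_mono {S T : Set α} (h : S ⊆ T) : lr M I S ≤ lr M I T := by
  obtain ⟨-, hdown, -, -⟩ := hI
  have h1 := rk'_mono M h
  by_cases hT : T ∈ I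
  · rw [lr_of_mem hT, lr_of_mem (hdown S T h hT)]; omega
  · by_cases hS : S ∈ I
    · rw [lr_of_mem hS, lr_of_not_mem hT]; omega
    · rw [lr_of_not_mem hS, lr_of_not_mem hT]; omega

lemma lr_insert_le (S : Set α) (e : α) : lr M I (insert e S) ≤ lr M I S + 1 := by
  obtain ⟨-, hdown, hsing, hunion⟩ := hI
  have h1 := rk'_insert_le M S e
  by_cases hS : S ∈ I
  · rw [lr_of_mem hS]
    by_cases hT : insert e S ∈ I
    · rw [lr_of_mem hT]; omega
    · rw [lr_of_not_mem hT]
      -- it suffices that the rank does not grow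
      have hrk : M.rk' (insert e S) = M.rk' S := by
        by_contra hne
        have hgrow : M.rk' (insert e S) = M.rk' S + 1 := by
          have := rk'_mono M (subset_insert e S); omega
        -- then e is not in S and {e} is independent
        have heS : e ∉ S := fun h => hne (by rw [insert_eq_self.mpr h])
        have hee : M.Indep {e} := by
          by_contra hdep
          exact hne (rk'_insert_of_dep M hdep)
        have hpair : M.ModularPairSets S {e} := by
          unfold Matroid.ModularPairSets
          have hint : S ∩ {e} = ∅ := by
            ext x; simp only [mem_inter_iff, mem_singleton_iff, mem_empty_iff_false,
              iff_false, not_and]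
            rintro hx rfl; exact heS hx
          have huni : S ∪ {e} = insert e S := by rw [union_singleton]
          rw [hint, huni, rk'_empty, hgrow, rk'_indep hee, Set.ncard_singleton]
          omega
        have := hunion S {e} hS (hsing e hee) hpair
        rw [union_singleton] at this
        exact hT this
      omega
  · rw [lr_of_not_mem hS]
    by_cases hT : insert e S ∈ I
    · rw [lr_of_mem hT]; omega
    · rw [lr_of_not_mem hT]; omega

lemma lr_submod (S T : Set α) :
    lr M I (S ∩ T) + lr M I (S ∪ T) ≤ lr M I S + lr M I T := by
  obtain ⟨-, hdown, -, hunion⟩ := hI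
  have h1 := rk'_submod M S T
  by_cases hS : S ∈ I
  · have hin : S ∩ T ∈ I := hdown (S ∩ T) S inter_subset_left hS
    by_cases hT : T ∈ I
    · rw [lr_of_mem hS, lr_of_mem hT, lr_of_mem hin]
      by_cases hpair : M.ModularPairSets S T
      · rw [lr_of_mem (hunion S T hS hT hpair)]
        exact le_of_eq hpair
      · have hlt : M.rk' (S ∩ T) + M.rk' (S ∪ T) < M.rk' S + M.rk' T :=
          lt_of_le_of_ne h1 hpair
        by_cases hU : S ∪ T ∈ I
        · rw [lr_of_mem hU]; omega
        · rw [lr_of_not_mem hU]; omega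
    · rw [lr_of_mem hS, lr_of_not_mem hT, lr_of_mem hin]
      by_cases hU : S ∪ T ∈ I
      · rw [lr_of_mem hU]; omega
      · rw [lr_of_not_mem hU]; omega
  · rw [lr_of_not_mem hS]
    have h2 : lr M I (S ∩ T) ≤ M.rk' (S ∩ T) + 1 := by
      by_cases h : S ∩ T ∈ I
      · rw [lr_of_mem h]; omega
      · rw [lr_of_not_mem h]
    have h3 : lr M I (S ∪ T) ≤ M.rk' (S ∪ T) + 1 := by
      by_cases h : S ∪ T ∈ I
      · rw [lr_of_mem h]; omega
      · rw [lr_of_not_mem h]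
    by_cases hT : T ∈ I
    · have hin : S ∩ T ∈ I := hdown (S ∩ T) T inter_subset_right hT
      rw [lr_of_mem hT, lr_of_mem hin]; omega
    · rw [lr_of_not_mem hT]; omega

end Lift

section RankFn

variable {f : Set α → ℕ}

lemma f_le_ncard (hempty : f ∅ = 0)
    (hinsert : ∀ S e, f (insert e S) ≤ f S + 1) (S : Set α) : f S ≤ S.ncard := by
  refine Set.Finite.induction_on S (Set.toFinite S) (by simp [hempty]) ?_
  intro a s ha hs ih
  have := hinsert s a
  rw [Set.ncard_insert_of_notMem ha hs]
  omega

lemma f_union_le (hinsert : ∀ S e, f (insert e S) ≤ f S + 1) (A D : Set α) :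
    f (A ∪ D) ≤ f A + D.ncard := by
  refine Set.Finite.induction_on D (Set.toFinite D) (by simp) ?_
  intro a s ha hs ih
  have h1 : A ∪ insert a s = insert a (A ∪ s) := by
    ext x; simp [or_comm, or_assoc, or_left_comm]
  have h2 := hinsert (A ∪ s) a
  rw [h1, Set.ncard_insert_of_notMem ha hs]
  omega

lemma f_absorb (hmono : ∀ {S T : Set α}, S ⊆ T → f S ≤ f T)
    (hsub : ∀ S T, f (S ∩ T) + f (S ∪ T) ≤ f S + f T)
    {B : Set α} (D : Set α) (h : ∀ e ∈ D, f (insert e B) = f B) :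
    f (B ∪ D) = f B := by
  revert h
  refine Set.Finite.induction_on D (Set.toFinite D) (fun _ => by simp) ?_
  intro a s ha hs ih h
  have hall : ∀ e ∈ s, f (insert e B) = f B := fun e he => h e (Or.inr he)
  have hBs : f (B ∪ s) = f B := ih hall
  have ha' : f (insert a B) = f B := h a (Or.inl rfl)
  have hsubm := hsub (B ∪ s) (insert a B)
  have hintB : f B ≤ f ((B ∪ s) ∩ insert a B) :=
    hmono (subset_inter subset_union_left (subset_insert a B))
  have hU : (B ∪ s) ∪ insert a B = B ∪ insert a s := by
    ext x; simp; tauto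
  rw [hU] at hsubm
  have hge : f B ≤ f (B ∪ insert a s) := hmono subset_union_left
  omega

/-- The independence predicate of the matroid with rank function `f`. -/
def FIndep (f : Set α → ℕ) (S : Set α) : Prop := f S = S.ncard

lemma findep_subset (hempty : f ∅ = 0)
    (hmono : ∀ {S T : Set α}, S ⊆ T → f S ≤ f T)
    (hinsert : ∀ S e, f (insert e S) ≤ f S + 1)
    {J S : Set α} (hS : FIndep f S) (hJS : J ⊆ S) : FIndep f J := by
  have h1 : f J ≤ J.ncard := f_le_ncard hempty hinsert J
  have h2 : f S ≤ f J + (S \ J).ncard := by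
    have := f_union_le hinsert J (S \ J)
    rwa [union_diff_cancel hJS] at this
  have h3 : (S \ J).ncard + J.ncard = S.ncard :=
    Set.ncard_diff_add_ncard_of_subset hJS (Set.toFinite S)
  unfold FIndep at *
  omega

lemma findep_aug (hempty : f ∅ = 0)
    (hmono : ∀ {S T : Set α}, S ⊆ T → f S ≤ f T)
    (hinsert : ∀ S e, f (insert e S) ≤ f S + 1)
    (hsub : ∀ S T, f (S ∩ T) + f (S ∪ T) ≤ f S + f T)
    {A J : Set α} (hA : FIndep f A) (hJ : FIndep f J) (hlt : A.ncard < J.ncard) :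
    ∃ e ∈ J, e ∉ A ∧ FIndep f (insert e A) := by
  by_contra hcon
  push_neg at hcon
  have hstep : ∀ e ∈ J \ A, f (insert e A) = f A := by
    rintro e ⟨heJ, heA⟩
    have h1 := hinsert A e
    have h2 : f A ≤ f (insert e A) := hmono (subset_insert e A)
    have h3 : ¬ FIndep f (insert e A) := hcon e heJ heA
    unfold FIndep at *
    rw [Set.ncard_insert_of_notMem heA (Set.toFinite A)] at h3
    omega
  have habs : f (A ∪ (J \ A)) = f A := f_absorb hmono hsub (J \ A) hstep
  rw [union_diff_self] at habs
  have : f J ≤ f (A ∪ J) := hmono subset_union_right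
  unfold FIndep at *
  omega

end RankFn

end ElemLift

/-- For a modular ideal `I` of `M` there is a matroid `N` on the same ground set (the
elementary `I`-lift of `M`) whose rank function is `rk S` for `S ∈ I` and `rk S + 1`
otherwise. -/
theorem exists_elementary_lift
    {α : Type*} [Fintype α] (M : Matroid α) (hE : M.E = Set.univ)
    (I : Set (Set α)) (hI : M.ModularIdeal I) :
    ∃ N : Matroid α, N.E = M.E ∧ ∀ S : Set α,
      (S ∈ I → N.rk' S = M.rk' S) ∧ (S ∉ I → N.rk' S = M.rk' S + 1) := by
  classical
  open ElemLift in
  set f : Set α → ℕ := lr M I with hf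
  have hempty : f ∅ = 0 := lr_empty hI
  have hmono : ∀ {S T : Set α}, S ⊆ T → f S ≤ f T := fun h => lr_mono hI h
  have hinsert : ∀ S e, f (insert e S) ≤ f S + 1 := fun S e => lr_insert_le hI S e
  have hsub : ∀ S T, f (S ∩ T) + f (S ∪ T) ≤ f S + f T := fun S T => lr_submod hI S T
  set N : Matroid α := (IndepMatroid.ofFinite Set.finite_univ (FIndep f)
    (by simpa [FIndep] using hempty)
    (fun J S hS hJS => findep_subset hempty hmono hinsert hS hJS)
    (fun A J hA hJ hlt => findep_aug hempty hmono hinsert hsub hA hJ hlt)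
    (fun J _ => subset_univ J)).matroid with hN
  have hNindep : ∀ S : Set α, N.Indep S ↔ FIndep f S := by
    intro S; rw [hN]; simp [IndepMatroid.ofFinite]
  have hNE : N.E = Set.univ := rfl
  have hrk : ∀ S : Set α, N.rk' S = f S := by
    intro S
    refine le_antisymm ?_ ?_
    · obtain ⟨B, hB, hBS, hcard⟩ := rk'_exists N S
      rw [← hcard]
      have : f B = B.ncard := (hNindep B).mp hB
      rw [← this]
      exact hmono hBS
    · obtain ⟨B, hB, hBS, hcard⟩ := rk'_exists N S
      have hBf : f B = B.ncard := (hNindep B).mp hB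
      have hstep : ∀ e ∈ S, f (insert e B) = f B := by
        intro e he
        by_cases heB : e ∈ B
        · rw [insert_eq_self.mpr heB]
        · have h1 := hinsert B e
          have h2 : f B ≤ f (insert e B) := hmono (subset_insert e B)
          by_contra hne
          have hgrow : f (insert e B) = f B + 1 := by omega
          have hindep : N.Indep (insert e B) := by
            rw [hNindep]
            unfold FIndep
            rw [hgrow, hBf, Set.ncard_insert_of_notMem heB (Set.toFinite B)]
          have := ncard_le_rk' hindep (insert_subset he hBS)
          rw [Set.ncard_insert_of_notMem heB (Set.toFinite B), hcard] at this
          omega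
      have habs : f (B ∪ S) = f B := f_absorb hmono hsub S hstep
      rw [union_eq_self_of_subset_left hBS] at habs
      rw [habs, hBf, hcard]
  refine ⟨N, by rw [hNE, hE], fun S => ⟨fun hS => ?_, fun hS => ?_⟩⟩
  · rw [hrk S, hf, lr_of_mem hS]
  · rw [hrk S, hf, lr_of_not_mem hS]
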